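/- Let G be a finite group and m > 1. If g ∈ G^m has weight 2 (that is, g = x_{[k,l)} · y_{[l,s)} with x ≠ e, y ≠ e, x ≠ y, 1 ≤ k < l < s ≤ m+1), then the number of common neighbours of e and g in G_m(G) is exactly 6, namely y_{[l,s)}, y_{[k,s)}, x_{[k,l)}, x_{[k,s)}, (x^{-1}y)_{[l,s)}, (y^{-1}x)_{[k,l)}. -/

import Mathlib

namespace CayleyStmt5

variable {G : Type*}

def intvl [Group G] (m : ℕ) (x : G) (k l : ℕ) : Fin m → G :=
  fun i => if k ≤ i.1 + 1 ∧ i.1 + 1 < l then x else 1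

def cS (G : Type*) [Group G] (m : ℕ) : Set (Fin m → G) :=
  {v | ∃ (x : G) (k l : ℕ), x ≠ 1 ∧ 1 ≤ k ∧ k < l ∧ l ≤ m + 1 ∧ v = intvl m x k l}

def cAdj [Group G] (m : ℕ) (g h : Fin m → G) : Prop := h * g⁻¹ ∈ cS G m

lemma classify [Group G] {m : ℕ} {x y z w : G} (hx : x ≠ 1) (hy : y ≠ 1) (hxy : x ≠ y)
    {k l s a b c d : ℕ} (hk : 1 ≤ k) (hkl : k < l) (hls : l < s) (hs : s ≤ m + 1)
    (hz : z ≠ 1) (ha : 1 ≤ a) (hab : a < b) (hb : b ≤ m + 1)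
    (hw : w ≠ 1) (hc : 1 ≤ c) (hcd : c < d) (hd : d ≤ m + 1)
    (E : ∀ j, 1 ≤ j → j ≤ m →
      (if a ≤ j ∧ j < b then z else 1) =
        (if c ≤ j ∧ j < d then w else 1) *
          ((if k ≤ j ∧ j < l then x else 1) * (if l ≤ j ∧ j < s then y else 1))) :
    (c = k ∧ d = l ∧ w = x⁻¹) ∨ (c = k ∧ d = l ∧ w = y * x⁻¹) ∨
    (c = l ∧ d = s ∧ w = y⁻¹) ∨ (c = l ∧ d = s ∧ w = x * y⁻¹) ∨
    (c = k ∧ d = s ∧ w = x⁻¹) ∨ (c = k ∧ d = s ∧ w = y⁻¹) := by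
  -- Step 1 : k ≤ c
  have hck : k ≤ c := by
    by_contra hcon
    push_neg at hcon
    have Ec := E c (by omega) (by omega)
    rw [if_neg (show ¬(k ≤ c ∧ c < l) by omega), if_neg (show ¬(l ≤ c ∧ c < s) by omega),
        if_pos (show c ≤ c ∧ c < d by omega)] at Ec
    simp only [mul_one] at Ec
    by_cases hAc : a ≤ c ∧ c < b
    · rw [if_pos hAc] at Ec
      have Es := E (s - 1) (by omega) (by omega)
      rw [if_neg (show ¬(k ≤ s - 1 ∧ s - 1 < l) by omega),
          if_pos (show l ≤ s - 1 ∧ s - 1 < s by omega)] at Es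
      simp only [one_mul] at Es
      have Ek := E k (by omega) (by omega)
      rw [if_pos (show k ≤ k ∧ k < l by omega), if_neg (show ¬(l ≤ k ∧ k < s) by omega)] at Ek
      simp only [mul_one] at Ek
      by_cases hCk : c ≤ k ∧ k < d
      · rw [if_pos hCk] at Ek
        by_cases hAk : a ≤ k ∧ k < b
        · rw [if_pos hAk] at Ek
          exact hx (left_eq_mul.mp (Ec.symm.trans Ek))
        · rw [if_neg hAk] at Ek
          have hw1 : w = x⁻¹ := eq_inv_of_mul_eq_one_left Ek.symm
          rw [if_neg (show ¬(a ≤ s - 1 ∧ s - 1 < b) by omega)] at Es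
          by_cases hCs : c ≤ s - 1 ∧ s - 1 < d
          · rw [if_pos hCs] at Es
            have hw2 : w = y⁻¹ := eq_inv_of_mul_eq_one_left Es.symm
            exact hxy (inv_injective (hw1.symm.trans hw2))
          · rw [if_neg hCs] at Es
            simp only [one_mul] at Es
            exact hy Es.symm
      · rw [if_neg hCk] at Ek
        simp only [one_mul] at Ek
        by_cases hAk : a ≤ k ∧ k < b
        · rw [if_pos hAk] at Ek
          rw [if_neg (show ¬(c ≤ s - 1 ∧ s - 1 < d) by omega)] at Es
          simp only [one_mul] at Es
          by_cases hAs : a ≤ s - 1 ∧ s - 1 < b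
          · rw [if_pos hAs] at Es
            exact hxy (Ek.symm.trans Es)
          · rw [if_neg hAs] at Es
            exact hy Es.symm
        · rw [if_neg hAk] at Ek
          exact hx Ek.symm
    · rw [if_neg hAc] at Ec
      exact hw Ec.symm
  -- Step 2 : d ≤ s
  have hds : d ≤ s := by
    by_contra hcon
    push_neg at hcon
    have Ed := E (d - 1) (by omega) (by omega)
    rw [if_neg (show ¬(k ≤ d - 1 ∧ d - 1 < l) by omega),
        if_neg (show ¬(l ≤ d - 1 ∧ d - 1 < s) by omega),
        if_pos (show c ≤ d - 1 ∧ d - 1 < d by omega)] at Ed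
    simp only [mul_one] at Ed
    have Es := E (s - 1) (by omega) (by omega)
    rw [if_neg (show ¬(k ≤ s - 1 ∧ s - 1 < l) by omega),
        if_pos (show l ≤ s - 1 ∧ s - 1 < s by omega)] at Es
    simp only [one_mul] at Es
    have Ek := E k (by omega) (by omega)
    rw [if_pos (show k ≤ k ∧ k < l by omega), if_neg (show ¬(l ≤ k ∧ k < s) by omega)] at Ek
    simp only [mul_one] at Ek
    by_cases hCs : c ≤ s - 1 ∧ s - 1 < d
    · rw [if_pos hCs] at Es
      by_cases hAd : a ≤ d - 1 ∧ d - 1 < b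
      · rw [if_pos hAd] at Ed
        by_cases hAs : a ≤ s - 1 ∧ s - 1 < b
        · rw [if_pos hAs] at Es
          exact hy (left_eq_mul.mp (Ed.symm.trans Es))
        · rw [if_neg hAs] at Es
          have hw2 : w = y⁻¹ := eq_inv_of_mul_eq_one_left Es.symm
          rw [if_neg (show ¬(a ≤ k ∧ k < b) by omega)] at Ek
          by_cases hCk : c ≤ k ∧ k < d
          · rw [if_pos hCk] at Ek
            have hw1 : w = x⁻¹ := eq_inv_of_mul_eq_one_left Ek.symm
            exact hxy (inv_injective (hw1.symm.trans hw2))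
          · rw [if_neg hCk] at Ek
            simp only [one_mul] at Ek
            exact hx Ek.symm
      · rw [if_neg hAd] at Ed
        exact hw Ed.symm
    · rw [if_neg hCs] at Es
      simp only [one_mul] at Es
      rw [if_neg (show ¬(c ≤ k ∧ k < d) by omega)] at Ek
      simp only [one_mul] at Ek
      by_cases hAk : a ≤ k ∧ k < b
      · rw [if_pos hAk] at Ek
        by_cases hAs : a ≤ s - 1 ∧ s - 1 < b
        · rw [if_pos hAs] at Es
          exact hxy (Ek.symm.trans Es)
        · rw [if_neg hAs] at Es
          exact hy Es.symm
      · rw [if_neg hAk] at Ek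
        exact hx Ek.symm
  -- Step 3 : c ≤ l
  have hcl : c ≤ l := by
    by_contra hcon
    push_neg at hcon
    have Ek := E k (by omega) (by omega)
    rw [if_pos (show k ≤ k ∧ k < l by omega), if_neg (show ¬(l ≤ k ∧ k < s) by omega),
        if_neg (show ¬(c ≤ k ∧ k < d) by omega)] at Ek
    simp only [one_mul, mul_one] at Ek
    have El := E l (by omega) (by omega)
    rw [if_neg (show ¬(k ≤ l ∧ l < l) by omega), if_pos (show l ≤ l ∧ l < s by omega),
        if_neg (show ¬(c ≤ l ∧ l < d) by omega)] at El
    simp only [one_mul] at El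
    by_cases hAk : a ≤ k ∧ k < b
    · rw [if_pos hAk] at Ek
      by_cases hAl : a ≤ l ∧ l < b
      · rw [if_pos hAl] at El
        exact hxy (Ek.symm.trans El)
      · rw [if_neg hAl] at El
        exact hy El.symm
    · rw [if_neg hAk] at Ek
      exact hx Ek.symm
  -- Step 4 : l ≤ d
  have hld : l ≤ d := by
    by_contra hcon
    push_neg at hcon
    have Ed := E d (by omega) (by omega)
    rw [if_pos (show k ≤ d ∧ d < l by omega), if_neg (show ¬(l ≤ d ∧ d < s) by omega),
        if_neg (show ¬(c ≤ d ∧ d < d) by omega)] at Ed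
    simp only [one_mul, mul_one] at Ed
    have Es := E (s - 1) (by omega) (by omega)
    rw [if_neg (show ¬(k ≤ s - 1 ∧ s - 1 < l) by omega),
        if_pos (show l ≤ s - 1 ∧ s - 1 < s by omega),
        if_neg (show ¬(c ≤ s - 1 ∧ s - 1 < d) by omega)] at Es
    simp only [one_mul] at Es
    by_cases hAd : a ≤ d ∧ d < b
    · rw [if_pos hAd] at Ed
      by_cases hAs : a ≤ s - 1 ∧ s - 1 < b
      · rw [if_pos hAs] at Es
        exact hxy (Ed.symm.trans Es)
      · rw [if_neg hAs] at Es
        exact hy Es.symm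
    · rw [if_neg hAd] at Ed
      exact hx Ed.symm
  -- Step 5 : c = k ∨ c = l
  have hc2 : c = k ∨ c = l := by
    by_contra hcon
    push_neg at hcon
    obtain ⟨h1, h2⟩ := hcon
    have hkc : k < c := by omega
    have hcl' : c < l := by omega
    have Ek := E k (by omega) (by omega)
    rw [if_pos (show k ≤ k ∧ k < l by omega), if_neg (show ¬(l ≤ k ∧ k < s) by omega),
        if_neg (show ¬(c ≤ k ∧ k < d) by omega)] at Ek
    simp only [one_mul, mul_one] at Ek
    by_cases hAk : a ≤ k ∧ k < b
    · rw [if_pos hAk] at Ek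
      have Ec := E c (by omega) (by omega)
      rw [if_pos (show k ≤ c ∧ c < l by omega), if_neg (show ¬(l ≤ c ∧ c < s) by omega),
          if_pos (show c ≤ c ∧ c < d by omega)] at Ec
      simp only [mul_one] at Ec
      by_cases hAc : a ≤ c ∧ c < b
      · rw [if_pos hAc] at Ec
        have : w * x = x := Ec.symm.trans Ek
        exact hw (mul_eq_right.mp this)
      · rw [if_neg hAc] at Ec
        have hw1 : w = x⁻¹ := eq_inv_of_mul_eq_one_left Ec.symm
        have Es := E (s - 1) (by omega) (by omega)
        rw [if_neg (show ¬(k ≤ s - 1 ∧ s - 1 < l) by omega),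
            if_pos (show l ≤ s - 1 ∧ s - 1 < s by omega),
            if_neg (show ¬(a ≤ s - 1 ∧ s - 1 < b) by omega)] at Es
        simp only [one_mul] at Es
        by_cases hCs : c ≤ s - 1 ∧ s - 1 < d
        · rw [if_pos hCs] at Es
          have hw2 : w = y⁻¹ := eq_inv_of_mul_eq_one_left Es.symm
          exact hxy (inv_injective (hw1.symm.trans hw2))
        · rw [if_neg hCs] at Es
          simp only [one_mul] at Es
          exact hy Es.symm
    · rw [if_neg hAk] at Ek
      exact hx Ek.symm
  -- Step 6 : d = l ∨ d = s
  have hd2 : d = l ∨ d = s := by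
    by_contra hcon
    push_neg at hcon
    obtain ⟨h1, h2⟩ := hcon
    have hld' : l < d := by omega
    have hds' : d < s := by omega
    have Ed := E d (by omega) (by omega)
    rw [if_neg (show ¬(k ≤ d ∧ d < l) by omega), if_pos (show l ≤ d ∧ d < s by omega),
        if_neg (show ¬(c ≤ d ∧ d < d) by omega)] at Ed
    simp only [one_mul] at Ed
    by_cases hAd : a ≤ d ∧ d < b
    · rw [if_pos hAd] at Ed
      have Ed1 := E (d - 1) (by omega) (by omega)
      rw [if_neg (show ¬(k ≤ d - 1 ∧ d - 1 < l) by omega),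
          if_pos (show l ≤ d - 1 ∧ d - 1 < s by omega),
          if_pos (show c ≤ d - 1 ∧ d - 1 < d by omega)] at Ed1
      simp only [one_mul] at Ed1
      by_cases hAd1 : a ≤ d - 1 ∧ d - 1 < b
      · rw [if_pos hAd1] at Ed1
        have : w * y = y := Ed1.symm.trans Ed
        exact hw (mul_eq_right.mp this)
      · rw [if_neg hAd1] at Ed1
        have hw1 : w = y⁻¹ := eq_inv_of_mul_eq_one_left Ed1.symm
        have Ek := E k (by omega) (by omega)
        rw [if_pos (show k ≤ k ∧ k < l by omega), if_neg (show ¬(l ≤ k ∧ k < s) by omega),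
            if_neg (show ¬(a ≤ k ∧ k < b) by omega)] at Ek
        simp only [mul_one] at Ek
        by_cases hCk : c ≤ k ∧ k < d
        · rw [if_pos hCk] at Ek
          have hw2 : w = x⁻¹ := eq_inv_of_mul_eq_one_left Ek.symm
          exact hxy (inv_injective (hw2.symm.trans hw1))
        · rw [if_neg hCk] at Ek
          simp only [one_mul] at Ek
          exact hx Ek.symm
    · rw [if_neg hAd] at Ed
      exact hy Ed.symm
  -- Step 7 : determine w in each case
  rcases hc2 with rfl | rfl <;> rcases hd2 with rfl | rfl
  · -- c = k, d = l
    have Ek := E c (by omega) (by omega)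
    rw [if_pos (show c ≤ c ∧ c < d by omega), if_neg (show ¬(d ≤ c ∧ c < s) by omega),
        if_pos (show c ≤ c ∧ c < d by omega)] at Ek
    simp only [mul_one] at Ek
    have Es := E (s - 1) (by omega) (by omega)
    rw [if_neg (show ¬(c ≤ s - 1 ∧ s - 1 < d) by omega),
        if_pos (show d ≤ s - 1 ∧ s - 1 < s by omega),
        if_neg (show ¬(c ≤ s - 1 ∧ s - 1 < d) by omega)] at Es
    simp only [one_mul] at Es
    by_cases hAs : a ≤ s - 1 ∧ s - 1 < b
    · rw [if_pos hAs] at Es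
      by_cases hAk : a ≤ c ∧ c < b
      · rw [if_pos hAk] at Ek
        right; left
        exact ⟨rfl, rfl, eq_mul_inv_of_mul_eq (Ek.symm.trans Es)⟩
      · rw [if_neg hAk] at Ek
        left
        exact ⟨rfl, rfl, eq_inv_of_mul_eq_one_left Ek.symm⟩
    · rw [if_neg hAs] at Es
      exact absurd Es.symm hy
  · -- c = k, d = s
    have Ek := E c (by omega) (by omega)
    rw [if_pos (show c ≤ c ∧ c < l by omega), if_neg (show ¬(l ≤ c ∧ c < d) by omega),
        if_pos (show c ≤ c ∧ c < d by omega)] at Ek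
    simp only [mul_one] at Ek
    have Es := E (d - 1) (by omega) (by omega)
    rw [if_neg (show ¬(c ≤ d - 1 ∧ d - 1 < l) by omega),
        if_pos (show l ≤ d - 1 ∧ d - 1 < d by omega),
        if_pos (show c ≤ d - 1 ∧ d - 1 < d by omega)] at Es
    simp only [one_mul] at Es
    by_cases hAk : a ≤ c ∧ c < b
    · rw [if_pos hAk] at Ek
      by_cases hAs : a ≤ d - 1 ∧ d - 1 < b
      · rw [if_pos hAs] at Es
        exact absurd (mul_left_cancel (Ek.symm.trans Es)) hxy
      · rw [if_neg hAs] at Es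
        right; right; right; right; right
        exact ⟨rfl, rfl, eq_inv_of_mul_eq_one_left Es.symm⟩
    · rw [if_neg hAk] at Ek
      right; right; right; right; left
      exact ⟨rfl, rfl, eq_inv_of_mul_eq_one_left Ek.symm⟩
  · -- c = l, d = l : impossible
    omega
  · -- c = l, d = s
    have Ek := E k (by omega) (by omega)
    rw [if_pos (show k ≤ k ∧ k < c by omega), if_neg (show ¬(c ≤ k ∧ k < d) by omega),
        if_neg (show ¬(c ≤ k ∧ k < d) by omega)] at Ek
    simp only [one_mul, mul_one] at Ek
    have Es := E (d - 1) (by omega) (by omega)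
    rw [if_neg (show ¬(k ≤ d - 1 ∧ d - 1 < c) by omega),
        if_pos (show c ≤ d - 1 ∧ d - 1 < d by omega),
        if_pos (show c ≤ d - 1 ∧ d - 1 < d by omega)] at Es
    simp only [one_mul] at Es
    by_cases hAk : a ≤ k ∧ k < b
    · rw [if_pos hAk] at Ek
      by_cases hAs : a ≤ d - 1 ∧ d - 1 < b
      · rw [if_pos hAs] at Es
        right; right; right; left
        exact ⟨rfl, rfl, eq_mul_inv_of_mul_eq (Es.symm.trans Ek)⟩
      · rw [if_neg hAs] at Es
        right; right; left
        exact ⟨rfl, rfl, eq_inv_of_mul_eq_one_left Es.symm⟩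
    · rw [if_neg hAk] at Ek
      exact absurd Ek.symm hx

lemma P1 [Group G] {m : ℕ} (x y : G) {k l s : ℕ} (hkl : k < l) (hls : l < s) :
    intvl m x⁻¹ k l * (intvl m x k l * intvl m y l s) = intvl m y l s := by
  funext i; simp only [Pi.mul_apply, intvl]; split_ifs <;> first | omega | group

lemma P2 [Group G] {m : ℕ} (x y : G) {k l s : ℕ} (hkl : k < l) (hls : l < s) :
    intvl m (y * x⁻¹) k l * (intvl m x k l * intvl m y l s) = intvl m y k s := by
  funext i; simp only [Pi.mul_apply, intvl]; split_ifs <;> first | omega | group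

lemma P3 [Group G] {m : ℕ} (x y : G) {k l s : ℕ} (hkl : k < l) (hls : l < s) :
    intvl m y⁻¹ l s * (intvl m x k l * intvl m y l s) = intvl m x k l := by
  funext i; simp only [Pi.mul_apply, intvl]; split_ifs <;> first | omega | group

lemma P4 [Group G] {m : ℕ} (x y : G) {k l s : ℕ} (hkl : k < l) (hls : l < s) :
    intvl m (x * y⁻¹) l s * (intvl m x k l * intvl m y l s) = intvl m x k s := by
  funext i; simp only [Pi.mul_apply, intvl]; split_ifs <;> first | omega | group

lemma P5 [Group G] {m : ℕ} (x y : G) {k l s : ℕ} (hkl : k < l) (hls : l < s) :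
    intvl m x⁻¹ k s * (intvl m x k l * intvl m y l s) = intvl m (x⁻¹ * y) l s := by
  funext i; simp only [Pi.mul_apply, intvl]; split_ifs <;> first | omega | group

lemma P6 [Group G] {m : ℕ} (x y : G) {k l s : ℕ} (hkl : k < l) (hls : l < s) :
    intvl m y⁻¹ k s * (intvl m x k l * intvl m y l s) = intvl m (y⁻¹ * x) k l := by
  funext i; simp only [Pi.mul_apply, intvl]; split_ifs <;> first | omega | group


/-- If `g = x_{[k,l)} · y_{[l,s)}` has weight `2`, then the identity and `g`
have exactly the six listed common neighbours in `Cay(G^m, S)`. -/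
theorem common_neighbours_weight_two [Group G] [Fintype G] (m : ℕ) (hm : 1 < m)
    (x y : G) (hx : x ≠ 1) (hy : y ≠ 1) (hxy : x ≠ y)
    (k l s : ℕ) (hk : 1 ≤ k) (hkl : k < l) (hls : l < s) (hs : s ≤ m + 1) :
    {v : Fin m → G | cAdj m (1 : Fin m → G) v ∧
        cAdj m (intvl m x k l * intvl m y l s) v} =
      ({intvl m y l s, intvl m y k s, intvl m x k l, intvl m x k s,
        intvl m (x⁻¹ * y) l s, intvl m (y⁻¹ * x) k l} : Set (Fin m → G)) ∧
    {v : Fin m → G | cAdj m (1 : Fin m → G) v ∧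
        cAdj m (intvl m x k l * intvl m y l s) v}.ncard = 6 := by
  have hset : {v : Fin m → G | cAdj m (1 : Fin m → G) v ∧
        cAdj m (intvl m x k l * intvl m y l s) v} =
      ({intvl m y l s, intvl m y k s, intvl m x k l, intvl m x k s,
        intvl m (x⁻¹ * y) l s, intvl m (y⁻¹ * x) k l} : Set (Fin m → G)) := by
    ext v
    simp only [Set.mem_setOf_eq, Set.mem_insert_iff, Set.mem_singleton_iff, cAdj, cS,
      Set.mem_setOf_eq]
    constructor
    · rintro ⟨⟨z, a, b, hz, ha, hab, hbm, hv1⟩, ⟨w, c, d, hw, hc, hcd, hdm, hv2⟩⟩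
      rw [inv_one, mul_one] at hv1
      rw [mul_inv_eq_iff_eq_mul] at hv2
      have heq : intvl m z a b = intvl m w c d * (intvl m x k l * intvl m y l s) :=
        hv1.symm.trans hv2
      have E : ∀ j, 1 ≤ j → j ≤ m →
          (if a ≤ j ∧ j < b then z else 1) =
            (if c ≤ j ∧ j < d then w else 1) *
              ((if k ≤ j ∧ j < l then x else 1) * (if l ≤ j ∧ j < s then y else 1)) := by
        intro j h1 h2
        have h3 := congrFun heq (⟨j - 1, by omega⟩ : Fin m)
        simp only [intvl, Pi.mul_apply] at h3
        rwa [Nat.sub_add_cancel h1] at h3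
      rcases classify hx hy hxy hk hkl hls hs hz ha hab hbm hw hc hcd hdm E with
        ⟨rfl, rfl, rfl⟩ | ⟨rfl, rfl, rfl⟩ | ⟨rfl, rfl, rfl⟩ | ⟨rfl, rfl, rfl⟩ |
        ⟨rfl, rfl, rfl⟩ | ⟨rfl, rfl, rfl⟩
      · exact Or.inl (hv2.trans (P1 x y hkl hls))
      · exact Or.inr (Or.inl (hv2.trans (P2 x y hkl hls)))
      · exact Or.inr (Or.inr (Or.inl (hv2.trans (P3 x y hkl hls))))
      · exact Or.inr (Or.inr (Or.inr (Or.inl (hv2.trans (P4 x y hkl hls)))))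
      · exact Or.inr (Or.inr (Or.inr (Or.inr (Or.inl (hv2.trans (P5 x y hkl hls))))))
      · exact Or.inr (Or.inr (Or.inr (Or.inr (Or.inr (hv2.trans (P6 x y hkl hls))))))
    · rintro (rfl | rfl | rfl | rfl | rfl | rfl)
      · exact ⟨⟨y, l, s, hy, by omega, hls, hs, by simp⟩,
          ⟨x⁻¹, k, l, inv_ne_one.mpr hx, hk, hkl, by omega, by
            rw [mul_inv_eq_iff_eq_mul]; exact (P1 x y hkl hls).symm⟩⟩
      · exact ⟨⟨y, k, s, hy, hk, by omega, hs, by simp⟩,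
          ⟨y * x⁻¹, k, l, fun h => hxy (mul_inv_eq_one.mp h).symm, hk, hkl, by omega, by
            rw [mul_inv_eq_iff_eq_mul]; exact (P2 x y hkl hls).symm⟩⟩
      · exact ⟨⟨x, k, l, hx, hk, hkl, by omega, by simp⟩,
          ⟨y⁻¹, l, s, inv_ne_one.mpr hy, by omega, hls, hs, by
            rw [mul_inv_eq_iff_eq_mul]; exact (P3 x y hkl hls).symm⟩⟩
      · exact ⟨⟨x, k, s, hx, hk, by omega, hs, by simp⟩,
          ⟨x * y⁻¹, l, s, fun h => hxy (mul_inv_eq_one.mp h), by omega, hls, hs, by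
            rw [mul_inv_eq_iff_eq_mul]; exact (P4 x y hkl hls).symm⟩⟩
      · exact ⟨⟨x⁻¹ * y, l, s, fun h => hxy (inv_mul_eq_one.mp h), by omega, hls, hs, by simp⟩,
          ⟨x⁻¹, k, s, inv_ne_one.mpr hx, hk, by omega, hs, by
            rw [mul_inv_eq_iff_eq_mul]; exact (P5 x y hkl hls).symm⟩⟩
      · exact ⟨⟨y⁻¹ * x, k, l, fun h => hxy (inv_mul_eq_one.mp h).symm, hk, hkl, by omega, by simp⟩,
          ⟨y⁻¹, k, s, inv_ne_one.mpr hy, hk, by omega, hs, by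
            rw [mul_inv_eq_iff_eq_mul]; exact (P6 x y hkl hls).symm⟩⟩
  refine ⟨hset, ?_⟩
  rw [hset]
  -- distinctness via evaluation
  have ne_of : ∀ (z w : G) (a b c d j : ℕ), 1 ≤ j → j ≤ m →
      (if a ≤ j ∧ j < b then z else 1) ≠ (if c ≤ j ∧ j < d then w else 1) →
      intvl m z a b ≠ intvl m w c d := by
    intro z w a b c d j h1 h2 hne h
    apply hne
    have h3 := congrFun h (⟨j - 1, by omega⟩ : Fin m)
    simp only [intvl] at h3
    rwa [Nat.sub_add_cancel h1] at h3
  have hkm : 1 ≤ k ∧ k ≤ m := ⟨hk, by omega⟩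
  have hlm : 1 ≤ l ∧ l ≤ m := ⟨by omega, by omega⟩
  have h12 : intvl m y l s ≠ intvl m y k s :=
    ne_of _ _ _ _ _ _ k hkm.1 hkm.2 (by
      rw [if_neg (by omega), if_pos (by omega)]; exact fun h => hy h.symm)
  have h13 : intvl m y l s ≠ intvl m x k l :=
    ne_of _ _ _ _ _ _ l hlm.1 hlm.2 (by
      rw [if_pos (by omega), if_neg (by omega)]; exact hy)
  have h14 : intvl m y l s ≠ intvl m x k s :=
    ne_of _ _ _ _ _ _ k hkm.1 hkm.2 (by
      rw [if_neg (by omega), if_pos (by omega)]; exact fun h => hx h.symm)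
  have h15 : intvl m y l s ≠ intvl m (x⁻¹ * y) l s :=
    ne_of _ _ _ _ _ _ l hlm.1 hlm.2 (by
      rw [if_pos (by omega), if_pos (by omega)]
      intro h; exact hx (by rwa [eq_inv_mul_iff_mul_eq, mul_eq_right] at h))
  have h16 : intvl m y l s ≠ intvl m (y⁻¹ * x) k l :=
    ne_of _ _ _ _ _ _ l hlm.1 hlm.2 (by
      rw [if_pos (by omega), if_neg (by omega)]; exact hy)
  have h23 : intvl m y k s ≠ intvl m x k l :=
    ne_of _ _ _ _ _ _ l hlm.1 hlm.2 (by
      rw [if_pos (by omega), if_neg (by omega)]; exact hy)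
  have h24 : intvl m y k s ≠ intvl m x k s :=
    ne_of _ _ _ _ _ _ k hkm.1 hkm.2 (by
      rw [if_pos (by omega), if_pos (by omega)]; exact fun h => hxy h.symm)
  have h25 : intvl m y k s ≠ intvl m (x⁻¹ * y) l s :=
    ne_of _ _ _ _ _ _ k hkm.1 hkm.2 (by
      rw [if_pos (by omega), if_neg (by omega)]; exact hy)
  have h26 : intvl m y k s ≠ intvl m (y⁻¹ * x) k l :=
    ne_of _ _ _ _ _ _ l hlm.1 hlm.2 (by
      rw [if_pos (by omega), if_neg (by omega)]; exact hy)
  have h34 : intvl m x k l ≠ intvl m x k s :=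
    ne_of _ _ _ _ _ _ l hlm.1 hlm.2 (by
      rw [if_neg (by omega), if_pos (by omega)]; exact fun h => hx h.symm)
  have h35 : intvl m x k l ≠ intvl m (x⁻¹ * y) l s :=
    ne_of _ _ _ _ _ _ k hkm.1 hkm.2 (by
      rw [if_pos (by omega), if_neg (by omega)]; exact hx)
  have h36 : intvl m x k l ≠ intvl m (y⁻¹ * x) k l :=
    ne_of _ _ _ _ _ _ k hkm.1 hkm.2 (by
      rw [if_pos (by omega), if_pos (by omega)]
      intro h; exact hy (by rwa [eq_inv_mul_iff_mul_eq, mul_eq_right] at h))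
  have h45 : intvl m x k s ≠ intvl m (x⁻¹ * y) l s :=
    ne_of _ _ _ _ _ _ k hkm.1 hkm.2 (by
      rw [if_pos (by omega), if_neg (by omega)]; exact hx)
  have h46 : intvl m x k s ≠ intvl m (y⁻¹ * x) k l :=
    ne_of _ _ _ _ _ _ l hlm.1 hlm.2 (by
      rw [if_pos (by omega), if_neg (by omega)]; exact hx)
  have h56 : intvl m (x⁻¹ * y) l s ≠ intvl m (y⁻¹ * x) k l :=
    ne_of _ _ _ _ _ _ l hlm.1 hlm.2 (by
      rw [if_pos (by omega), if_neg (by omega)]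
      intro h; exact hxy (by rwa [inv_mul_eq_one] at h))
  have n1 : intvl m y l s ∉ ({intvl m y k s, intvl m x k l, intvl m x k s,
      intvl m (x⁻¹ * y) l s, intvl m (y⁻¹ * x) k l} : Set (Fin m → G)) := by
    simp only [Set.mem_insert_iff, Set.mem_singleton_iff]
    push_neg
    exact ⟨h12, h13, h14, h15, h16⟩
  have n2 : intvl m y k s ∉ ({intvl m x k l, intvl m x k s,
      intvl m (x⁻¹ * y) l s, intvl m (y⁻¹ * x) k l} : Set (Fin m → G)) := by
    simp only [Set.mem_insert_iff, Set.mem_singleton_iff]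
    push_neg
    exact ⟨h23, h24, h25, h26⟩
  have n3 : intvl m x k l ∉ ({intvl m x k s,
      intvl m (x⁻¹ * y) l s, intvl m (y⁻¹ * x) k l} : Set (Fin m → G)) := by
    simp only [Set.mem_insert_iff, Set.mem_singleton_iff]
    push_neg
    exact ⟨h34, h35, h36⟩
  have n4 : intvl m x k s ∉ ({intvl m (x⁻¹ * y) l s,
      intvl m (y⁻¹ * x) k l} : Set (Fin m → G)) := by
    simp only [Set.mem_insert_iff, Set.mem_singleton_iff]
    push_neg
    exact ⟨h45, h46⟩
  have n5 : intvl m (x⁻¹ * y) l s ∉ ({intvl m (y⁻¹ * x) k l} : Set (Fin m → G)) := by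
    simp only [Set.mem_singleton_iff]
    exact h56
  rw [Set.ncard_insert_of_notMem n1, Set.ncard_insert_of_notMem n2,
      Set.ncard_insert_of_notMem n3, Set.ncard_insert_of_notMem n4,
      Set.ncard_insert_of_notMem n5, Set.ncard_singleton]

end CayleyStmt5
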